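/- Neumann series perturbation of weighted Bergman projections: let ω be an admissible weight on a bounded domain Ω ⊂ ℂ^n and h a real bounded measurable function with 0 < c ≤ |h| ≤ C < 1. Then (1+h)ω is an admissible weight and the weighted Bergman projection satisfies P_{(1+h)ω} = P_ω + ∑_{k=1}^∞ (−1)^{k−1} (P_ω ∘ M_h)^k ∘ (Id − P_ω), with the series converging in operator norm on L²(ω dλ), where M_h is multiplication by h. -/

import Mathlib

open ContinuousLinearMap

/-- Neumann series perturbation of weighted Bergman projections
(abstract Hilbert-space form).  H plays the role of L²(ω dλ), A of the closed subspace
A²(Ω, ω dλ) of holomorphic functions, P = P_ω the orthogonal projection onto A, and T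
the (self-adjoint) multiplication operator M_h by a real function h with
0 < c ≤ |h| ≤ C < 1.  Then the modified inner product ⟪(1+T)·,·⟫ (corresponding to the
admissible weight (1+h)ω) is positive definite, the series
∑_{k≥1} (−1)^{k−1}(P∘T)^k∘(Id−P) converges in operator norm, and
Q = P + ∑_{k≥1} (−1)^{k−1}(P∘T)^k∘(Id−P) is the Bergman projection P_{(1+h)ω}:
it takes values in A and f − Q f is ⟪(1+T)·,·⟫-orthogonal to A for every f. -/
theorem stmt15 {H : Type*} [NormedAddCommGroup H] [InnerProductSpace ℂ H]
    [CompleteSpace H]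
    (A : Submodule ℂ H) (hA : IsClosed (A : Set H)) [A.HasOrthogonalProjection]
    (T : H →L[ℂ] H) (hT : IsSelfAdjoint T)
    (c C : ℝ) (hc : 0 < c) (hC : C < 1)
    (hTc : ∀ x : H, c * ‖x‖ ≤ ‖T x‖) (hTC : ‖T‖ ≤ C)
    (P : H →L[ℂ] H) (hP : P = A.subtypeL.comp A.orthogonalProjectionOnto)
    (F : ℕ → (H →L[ℂ] H))
    (hF : ∀ k : ℕ, F k = ((-1 : ℂ) ^ k) •
      (((P.comp T) ^ (k + 1)).comp (ContinuousLinearMap.id ℂ H - P))) :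
    (∀ x : H, x ≠ 0 → 0 < (inner ℂ (x + T x) x : ℂ).re) ∧
    Summable F ∧
    (∀ f : H, (P + ∑' k, F k) f ∈ A) ∧
    (∀ f : H, ∀ a ∈ A,
      (inner ℂ ((f - (P + ∑' k, F k) f) + T (f - (P + ∑' k, F k) f)) a : ℂ) = 0) := by
  have hPA : ∀ x : H, P x ∈ A := by
    intro x; rw [hP]; exact (A.orthogonalProjectionOnto x).2
  have hPid : ∀ x ∈ A, P x = x := by
    intro x hx; rw [hP]; exact Submodule.starProjection_eq_self_iff.mpr hx
  have hPP : ∀ x : H, P (P x) = P x := fun x => hPid _ (hPA x)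
  have hPnorm : ∀ x : H, ‖P x‖ ≤ ‖x‖ := by
    intro x
    rw [hP]
    calc ‖(A.orthogonalProjectionOnto x : H)‖ = ‖A.orthogonalProjectionOnto x‖ := rfl
      _ ≤ ‖A.orthogonalProjectionOnto‖ * ‖x‖ := (A.orthogonalProjectionOnto).le_opNorm x
      _ ≤ 1 * ‖x‖ :=
          mul_le_mul_of_nonneg_right (Submodule.orthogonalProjectionOnto_norm_le A) (norm_nonneg x)
      _ = ‖x‖ := one_mul _
  set C' : ℝ := max C 0 with hC'def
  have hC'0 : 0 ≤ C' := le_max_right _ _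
  have hC'1 : C' < 1 := max_lt hC one_pos
  have hTC' : ‖T‖ ≤ C' := hTC.trans (le_max_left _ _)
  set R : H →L[ℂ] H := P.comp T with hRdef
  have hRnorm : ‖R‖ ≤ C' := by
    apply ContinuousLinearMap.opNorm_le_bound _ hC'0
    intro x
    calc ‖R x‖ = ‖P (T x)‖ := rfl
      _ ≤ ‖T x‖ := hPnorm _
      _ ≤ ‖T‖ * ‖x‖ := T.le_opNorm x
      _ ≤ C' * ‖x‖ := mul_le_mul_of_nonneg_right hTC' (norm_nonneg x)
  have hRpow : ∀ k : ℕ, ‖R ^ (k + 1)‖ ≤ C' ^ (k + 1) := by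
    intro k
    calc ‖R ^ (k + 1)‖ ≤ ‖R‖ ^ (k + 1) := norm_pow_le' R (Nat.succ_pos k)
      _ ≤ C' ^ (k + 1) := pow_le_pow_left₀ (norm_nonneg R) hRnorm _
  set M : ℝ := ‖ContinuousLinearMap.id ℂ H - P‖ with hMdef
  have hM0 : 0 ≤ M := norm_nonneg _
  have hFnorm : ∀ k : ℕ, ‖F k‖ ≤ (C' * M) * C' ^ k := by
    intro k
    rw [hF k, norm_smul]
    have h1 : ‖(-1 : ℂ) ^ k‖ = 1 := by
      rw [norm_pow, norm_neg, norm_one, one_pow]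
    rw [h1, one_mul]
    calc ‖(R ^ (k + 1)).comp (ContinuousLinearMap.id ℂ H - P)‖
        ≤ ‖R ^ (k + 1)‖ * M := ContinuousLinearMap.opNorm_comp_le _ _
      _ ≤ C' ^ (k + 1) * M := mul_le_mul_of_nonneg_right (hRpow k) hM0
      _ = (C' * M) * C' ^ k := by ring
  have hFsum : Summable F :=
    Summable.of_norm_bounded
      (Summable.mul_left (C' * M) (summable_geometric_of_lt_one hC'0 hC'1)) hFnorm
  set S : H →L[ℂ] H := ∑' k, F k with hSdef
  have hSapp : ∀ f : H, HasSum (fun k => F k f) (S f) := by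
    intro f
    have := hFsum.hasSum.mapL (ContinuousLinearMap.apply ℂ H f)
    simpa using this
  have hFmem : ∀ (k : ℕ) (f : H), F k f ∈ A := by
    intro k f
    rw [hF k]
    simp only [ContinuousLinearMap.smul_apply, ContinuousLinearMap.comp_apply]
    apply A.smul_mem
    rw [pow_succ']
    exact hPA _
  have hSmem : ∀ f : H, S f ∈ A := by
    intro f
    have h := (hSapp f).tendsto_sum_nat
    exact hA.mem_of_tendsto h (Filter.Eventually.of_forall fun n =>
      A.sum_mem fun k _ => hFmem k f)
  have hrec : ∀ (k : ℕ) (f : H), R (F k f) = -(F (k + 1) f) := by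
    intro k f
    rw [hF k, hF (k + 1)]
    simp only [ContinuousLinearMap.smul_apply, ContinuousLinearMap.comp_apply, map_smul]
    have h2 : R ((R ^ (k + 1)) ((ContinuousLinearMap.id ℂ H - P) f))
        = (R ^ (k + 2)) ((ContinuousLinearMap.id ℂ H - P) f) := by
      rw [show (k + 2) = (k + 1) + 1 from rfl, pow_succ' R (k + 1),
        ContinuousLinearMap.mul_apply]
    rw [h2, pow_succ (-1 : ℂ) k]
    simp [neg_smul, mul_neg, smul_smul]
  have hRS : ∀ f : H, R (S f) = F 0 f - S f := by
    intro f
    have h1 : HasSum (fun k => R (F k f)) (R (S f)) := (hSapp f).mapL R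
    have h2 : HasSum (fun k => F (k + 1) f) (-(R (S f))) := by
      have := h1.neg
      convert this using 2 with k
      rw [hrec k f, neg_neg]
    have h3 : HasSum (fun n => F (n + 1) f) (S f - F 0 f) := by
      rw [hasSum_nat_add_iff (f := fun k => F k f) 1]
      simpa using hSapp f
    have h4 := h2.unique h3
    rw [neg_eq_iff_eq_neg] at h4
    rw [h4, neg_sub]
  refine ⟨?_, hFsum, ?_, ?_⟩
  · intro x hx
    have hx0 : 0 < ‖x‖ := norm_pos_iff.mpr hx
    have h1 : (inner ℂ (x + T x) x : ℂ).re = (inner ℂ x x : ℂ).re + (inner ℂ (T x) x : ℂ).re := by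
      rw [inner_add_left, Complex.add_re]
    have h2 : (inner ℂ x x : ℂ).re = ‖x‖ ^ 2 := by
      have := inner_self_eq_norm_sq (𝕜 := ℂ) x
      simpa using this
    have h3 : |(inner ℂ (T x) x : ℂ).re| ≤ C * ‖x‖ ^ 2 := by
      calc |(inner ℂ (T x) x : ℂ).re| ≤ ‖(inner ℂ (T x) x : ℂ)‖ :=
            Complex.abs_re_le_norm _
        _ = ‖(inner ℂ (T x) x : ℂ)‖ := rfl
        _ ≤ ‖T x‖ * ‖x‖ := norm_inner_le_norm _ _
        _ ≤ (C * ‖x‖) * ‖x‖ := by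
            apply mul_le_mul_of_nonneg_right _ (norm_nonneg x)
            exact (T.le_opNorm x).trans (mul_le_mul_of_nonneg_right hTC (norm_nonneg x))
        _ = C * ‖x‖ ^ 2 := by ring
    rw [h1, h2]
    have h5 := (abs_le.mp h3).1
    have hx2 : 0 < ‖x‖ ^ 2 := by positivity
    nlinarith [mul_pos (sub_pos.mpr hC) hx2]
  · intro f
    simp only [ContinuousLinearMap.add_apply]
    exact A.add_mem (hPA f) (hSmem f)
  · intro f a ha
    set u : H := f - (P + S) f with hu
    set g : H := f - P f with hg
    have hu_eq : u = g - S f := by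
      rw [hu, hg]
      simp only [ContinuousLinearMap.add_apply]
      abel
    have hF0 : F 0 f = R g := by
      rw [hF 0]
      simp [hg]
    have hRu : R u = S f := by
      rw [hu_eq, map_sub, hRS f, hF0]
      abel
    have hPg : P g = 0 := by
      rw [hg, map_sub, hPP, sub_self]
    have hPu : P u = -(R u) := by
      rw [hRu, hu_eq, map_sub, hPg, hPid _ (hSmem f), zero_sub]
    have hkey : P (u + T u) = 0 := by
      rw [map_add, hPu]
      have hPT : P (T u) = R u := rfl
      rw [hPT, neg_add_cancel]
    have hmem : u + T u ∈ Aᗮ := by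
      rw [← Submodule.orthogonalProjectionOnto_eq_zero_iff]
      rw [hP] at hkey
      exact Subtype.ext hkey
    exact (Submodule.mem_orthogonal' A _).mp hmem a ha
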